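/- Let G be a connected undirected simple graph on the vertex set {1,…,m} with m ≥ 2 and Laplacian matrix L ∈ ℝ^{m×m}. Let X ∈ ℝ^{n×d} have column blocks X_j ∈ ℝ^{n×d_j} (d = Σ_{j=1}^m d_j), with vectors θ ∈ ℝ^d partitioned accordingly as θ = (θ₁;…;θ_m). Let ℓ₁,…,ℓₙ : ℝ → ℝ be convex differentiable functions, let r : ℝ^d → ℝ, let κ > 0, let λ̄₁,…,λ̄_m ∈ ℝⁿ, and let θ̂ ∈ ℝ^d. Then inf over θ ∈ ℝ^d and V ∈ ℝ^{n×m} of [ r(θ) + (1/n)·Σ_{j=1}^m λ̄_jᵀ (X_j θ_j + V L e_j) − (1/n)·Σ_{i=1}^n ℓᵢ*(λ̄_{1,i}) + κ·(‖θ‖₂² + ‖V‖_F²) ] ≤ r(θ̂) + (1/n)·Σ_{i=1}^n ℓᵢ((X θ̂)ᵢ) + κ·(1 + 2·‖L†‖²·‖X‖²)·‖θ̂‖₂², where λ̄_{1,i} denotes the i-th coordinate of λ̄₁ and the left-hand side is interpreted in the extended reals. -/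

import Mathlib

open Matrix Finset

/-- The ℓ₂→ℓ₂ operator norm (largest singular value) of a real matrix. -/
noncomputable def opNorm {α β : Type*} [Fintype α] [Fintype β] [DecidableEq β]
    (M : Matrix α β ℝ) : ℝ :=
  ‖LinearMap.toContinuousLinearMap (Matrix.toEuclideanLin M)‖

/-- `P` satisfies the four Moore–Penrose conditions for `M`. -/
def IsMoorePenrose {α β : Type*} [Fintype α] [Fintype β]
    (M : Matrix α β ℝ) (P : Matrix β α ℝ) : Prop :=
  M * P * M = M ∧ P * M * P = P ∧ (M * P)ᵀ = M * P ∧ (P * M)ᵀ = P * M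

open Classical in
/-- The Moore–Penrose pseudoinverse. -/
noncomputable def pinv {α β : Type*} [Fintype α] [Fintype β]
    (M : Matrix α β ℝ) : Matrix β α ℝ :=
  if h : ∃ P, IsMoorePenrose M P then h.choose else 0

/-- The convex (Fenchel) conjugate of `ℓ : ℝ → ℝ`, valued in the extended reals. -/
noncomputable def sconj (g : ℝ → ℝ) (v : ℝ) : EReal :=
  ⨆ x : ℝ, ((v * x - g x : ℝ) : EReal)

lemma euclid_norm_sq {γ : Type*} [Fintype γ] (w : γ → ℝ) :
    ‖(WithLp.equiv 2 (γ → ℝ)).symm w‖ ^ 2 = ∑ i, (w i) ^ 2 := by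
  rw [EuclideanSpace.norm_eq]
  rw [Real.sq_sqrt (by positivity)]
  simp [Real.norm_eq_abs, sq_abs]

lemma sumsq_mulVec_le {α β : Type*} [Fintype α] [Fintype β] [DecidableEq β]
    (M : Matrix α β ℝ) (x : β → ℝ) :
    ∑ i, (M.mulVec x i) ^ 2 ≤ opNorm M ^ 2 * ∑ k, (x k) ^ 2 := by
  have h := (LinearMap.toContinuousLinearMap (Matrix.toEuclideanLin M)).le_opNorm
    ((WithLp.equiv 2 (β → ℝ)).symm x)
  have h2 : (LinearMap.toContinuousLinearMap (Matrix.toEuclideanLin M))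
      ((WithLp.equiv 2 (β → ℝ)).symm x) = (WithLp.equiv 2 (α → ℝ)).symm (M *ᵥ x) := by
    simp [LinearMap.coe_toContinuousLinearMap']
  rw [h2] at h
  have h3 := pow_le_pow_left₀ (norm_nonneg _) h 2
  rw [mul_pow, euclid_norm_sq, euclid_norm_sq] at h3
  exact h3

lemma exists_isMoorePenrose_of_isHermitian {α : Type*} [Fintype α] [DecidableEq α]
    {M : Matrix α α ℝ} (hM : M.IsHermitian) : ∃ P, IsMoorePenrose M P := by
  set U : Matrix α α ℝ := (hM.eigenvectorUnitary : Matrix α α ℝ) with hUdef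
  have hU2 : star U * U = 1 := (Matrix.mem_unitaryGroup_iff').mp hM.eigenvectorUnitary.2
  set ev : α → ℝ := hM.eigenvalues with hev
  have key : ∀ A B : Matrix α α ℝ,
      (U * A * star U) * (U * B * star U) = U * (A * B) * star U := by
    intro A B
    rw [Matrix.mul_assoc (U * A) (star U), ← Matrix.mul_assoc (star U) (U * B),
      ← Matrix.mul_assoc (star U) U, hU2, Matrix.one_mul, ← Matrix.mul_assoc,
      Matrix.mul_assoc U A B]
  have hsymm : ∀ f : α → ℝ, (U * diagonal f * star U)ᵀ = U * diagonal f * star U := by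
    intro f
    have hstar : star U = Uᵀ := by
      rw [Matrix.star_eq_conjTranspose, Matrix.conjTranspose]
      ext i j; simp
    rw [hstar, Matrix.transpose_mul, Matrix.transpose_mul, Matrix.transpose_transpose,
      Matrix.diagonal_transpose, Matrix.mul_assoc]
  have hspec : M = U * diagonal ev * star U := by
    have := hM.spectral_theorem
    simpa using this
  refine ⟨U * diagonal (fun i => (ev i)⁻¹) * star U, ?_, ?_, ?_, ?_⟩
  · rw [hspec, key, key, Matrix.diagonal_mul_diagonal, Matrix.diagonal_mul_diagonal]
    congr 1
    · congr 1
      funext i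
      by_cases h : ev i = 0 <;> field_simp [h]
  · rw [hspec, key, key, Matrix.diagonal_mul_diagonal, Matrix.diagonal_mul_diagonal]
    congr 1
    · congr 1
      funext i
      by_cases h : ev i = 0 <;> field_simp [h]
  · rw [hspec, key, Matrix.diagonal_mul_diagonal, hsymm]
  · rw [hspec, key, Matrix.diagonal_mul_diagonal, hsymm]

lemma lap_range {m : ℕ} [NeZero m] (G : SimpleGraph (Fin m)) [DecidableRel G.Adj]
    (hG : G.Connected) (b : Fin m → ℝ) (hb : ∑ j, b j = 0) :
    ∃ c, (G.lapMatrix ℝ) *ᵥ c = b := by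
  classical
  set f := Matrix.toLin' (G.lapMatrix ℝ) with hf
  have hcard : Fintype.card G.ConnectedComponent = 1 := by
    rw [Fintype.card_eq_one_iff]
    refine ⟨G.connectedComponentMk 0, ?_⟩
    intro c
    induction c using SimpleGraph.ConnectedComponent.ind with
    | _ v => exact SimpleGraph.ConnectedComponent.eq.mpr (hG.preconnected v 0)
  have hker : Module.finrank ℝ (LinearMap.ker f) = 1 := by
    rw [← SimpleGraph.card_connectedComponent_eq_finrank_ker_toLin'_lapMatrix, hcard]
  let g : (Fin m → ℝ) →ₗ[ℝ] ℝ :=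
    { toFun := fun v => ∑ j, v j
      map_add' := fun x y => by simp [Finset.sum_add_distrib]
      map_smul' := fun c x => by simp [Finset.mul_sum] }
  have hgsurj : Function.Surjective g := by
    intro x
    exact ⟨fun _ => x / m, by
      simp only [g, LinearMap.coe_mk, AddHom.coe_mk, Finset.sum_const, card_univ,
        Fintype.card_fin, nsmul_eq_mul]
      rw [mul_div_cancel₀ x (Nat.cast_ne_zero.mpr (NeZero.ne m))]⟩
  have hrangeg : LinearMap.range g = ⊤ := LinearMap.range_eq_top.mpr hgsurj
  have hZ : Module.finrank ℝ (LinearMap.ker g) + 1 = m := by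
    have := LinearMap.finrank_range_add_finrank_ker g
    rw [hrangeg] at this
    simp only [finrank_top, Module.finrank_self, Module.finrank_fintype_fun_eq_card,
      Fintype.card_fin] at this
    omega
  have hR : Module.finrank ℝ (LinearMap.range f) + 1 = m := by
    have := LinearMap.finrank_range_add_finrank_ker f
    rw [hker, Module.finrank_fintype_fun_eq_card, Fintype.card_fin] at this
    exact this
  have hsub : LinearMap.range f ≤ LinearMap.ker g := by
    rintro x ⟨c, rfl⟩
    simp only [LinearMap.mem_ker]
    show ∑ j, f c j = 0
    have : ∀ j, f c j = ∑ k, G.lapMatrix ℝ j k * c k := by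
      intro j; rw [hf]; simp [Matrix.toLin'_apply, Matrix.mulVec, dotProduct]
    simp only [this]
    rw [Finset.sum_comm]
    have hcol : ∀ k, ∑ j, G.lapMatrix ℝ j k = 0 := by
      intro k
      have h0 := congrFun (G.lapMatrix_mulVec_const_eq_zero (R := ℝ)) k
      simp only [Matrix.mulVec, dotProduct, mul_one, Pi.zero_apply] at h0
      calc ∑ j, G.lapMatrix ℝ j k = ∑ j, G.lapMatrix ℝ k j := by
            refine Finset.sum_congr rfl fun j _ => ?_
            exact congrFun (congrFun (G.isSymm_lapMatrix (R := ℝ)).symm k) j |>.symm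
        _ = 0 := h0
    calc ∑ k, ∑ j, G.lapMatrix ℝ j k * c k
        = ∑ k, (∑ j, G.lapMatrix ℝ j k) * c k := by
          refine Finset.sum_congr rfl fun k _ => ?_
          rw [Finset.sum_mul]
      _ = 0 := by simp [hcol]
  have heq : LinearMap.range f = LinearMap.ker g := by
    apply Submodule.eq_of_le_of_finrank_le hsub
    omega
  have hbmem : b ∈ LinearMap.range f := by
    rw [heq]
    exact hb
  obtain ⟨c, hc⟩ := hbmem
  exact ⟨c, by rw [← hc, hf]; simp [Matrix.toLin'_apply]⟩

lemma ereal_coe_sum {ι : Type*} (s : Finset ι) (f : ι → ℝ) :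
    ((∑ i ∈ s, f i : ℝ) : EReal) = ∑ i ∈ s, (f i : EReal) :=
  map_sum (⟨⟨(fun (x:ℝ) => (x : EReal)), EReal.coe_zero⟩, EReal.coe_add⟩ : ℝ →+ EReal) f s

theorem stmt_8 {m n : ℕ} [NeZero m] (hm : 2 ≤ m)
    (G : SimpleGraph (Fin m)) [DecidableRel G.Adj] (hG : G.Connected)
    (d : Fin m → ℕ) (Xb : ∀ j, Matrix (Fin n) (Fin (d j)) ℝ)
    (X : Matrix (Fin n) ((j : Fin m) × Fin (d j)) ℝ)
    (hX : ∀ i j k, X i ⟨j, k⟩ = Xb j i k)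
    (ℓ : Fin n → ℝ → ℝ)
    (hconv : ∀ i, ConvexOn ℝ Set.univ (ℓ i))
    (hdiff : ∀ i, Differentiable ℝ (ℓ i))
    (r : (∀ j, Fin (d j) → ℝ) → ℝ)
    (κ : ℝ) (hκ : 0 < κ)
    (lambar : Fin m → Fin n → ℝ)
    (θhat : ∀ j, Fin (d j) → ℝ) :
    (⨅ (θ : ∀ j, Fin (d j) → ℝ) (V : Matrix (Fin n) (Fin m) ℝ),
        ((r θ + (1 / (n : ℝ)) * ∑ j, lambar j ⬝ᵥ
              (fun i => (Xb j).mulVec (θ j) i + (V * G.lapMatrix ℝ) i j)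
            + κ * ((∑ j, ∑ k, (θ j k) ^ 2) + ∑ i, ∑ j, (V i j) ^ 2) : ℝ) : EReal)
          - ((1 / (n : ℝ) : ℝ) : EReal) * ∑ i, sconj (ℓ i) (lambar 0 i))
      ≤ ((r θhat + (1 / (n : ℝ)) * ∑ i, ℓ i (∑ j, (Xb j).mulVec (θhat j) i)
          + κ * (1 + 2 * opNorm (pinv (G.lapMatrix ℝ)) ^ 2 * opNorm X ^ 2)
            * (∑ j, ∑ k, (θhat j k) ^ 2) : ℝ) : EReal) := by
  classical
  have hHerm : (G.lapMatrix ℝ).IsHermitian := by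
    have hs := G.isSymm_lapMatrix (R := ℝ)
    rw [Matrix.IsHermitian]
    rw [show (G.lapMatrix ℝ)ᴴ = (G.lapMatrix ℝ)ᵀ by
      rw [Matrix.conjTranspose]; ext i j; simp]
    exact hs
  have hex : ∃ P, IsMoorePenrose (G.lapMatrix ℝ) P :=
    exists_isMoorePenrose_of_isHermitian hHerm
  have hMP : IsMoorePenrose (G.lapMatrix ℝ) (pinv (G.lapMatrix ℝ)) := by
    rw [pinv, dif_pos hex]; exact hex.choose_spec
  set P := pinv (G.lapMatrix ℝ) with hPdef
  set u : Fin n → ℝ := fun i => ∑ j, (Xb j).mulVec (θhat j) i with hu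
  set B : Matrix (Fin n) (Fin m) ℝ :=
    Matrix.of (fun i j => (if j = (0 : Fin m) then u i else 0) - (Xb j).mulVec (θhat j) i)
    with hB
  set V : Matrix (Fin n) (Fin m) ℝ := (P * Bᵀ)ᵀ with hV
  have hBsum : ∀ i, ∑ j, B i j = 0 := by
    intro i
    simp only [hB, Matrix.of_apply, Finset.sum_sub_distrib, Finset.sum_ite_eq',
      Finset.mem_univ, if_true]
    simp [hu]
  have hVL : V * G.lapMatrix ℝ = B := by
    ext i j
    obtain ⟨c, hc⟩ := lap_range G hG (fun l => B i l) (hBsum i)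
    have hLPL : (G.lapMatrix ℝ) *ᵥ (P *ᵥ (fun l => B i l)) = fun l => B i l := by
      conv_lhs => rw [← hc]
      rw [Matrix.mulVec_mulVec, Matrix.mulVec_mulVec, Matrix.mul_assoc, ← Matrix.mul_assoc,
        hMP.1, hc]
    calc (V * G.lapMatrix ℝ) i j = ∑ k, (P *ᵥ (fun l => B i l)) k * G.lapMatrix ℝ k j := by
          rw [Matrix.mul_apply]
          refine Finset.sum_congr rfl fun k _ => ?_
          have hvk : V i k = (P *ᵥ (fun l => B i l)) k := by
            simp [hV, Matrix.mul_apply, Matrix.mulVec, dotProduct, Matrix.transpose_apply,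
              mul_comm]
          rw [hvk]
      _ = ∑ k, G.lapMatrix ℝ j k * (P *ᵥ (fun l => B i l)) k := by
          refine Finset.sum_congr rfl fun k _ => ?_
          rw [mul_comm]
          congr 1
          exact (congrFun (congrFun (G.isSymm_lapMatrix (R := ℝ)) j) k)
      _ = ((G.lapMatrix ℝ) *ᵥ (P *ᵥ (fun l => B i l))) j := rfl
      _ = B i j := by rw [hLPL]
  -- the linear term collapses
  have hS : ∑ j, lambar j ⬝ᵥ
      (fun i => (Xb j).mulVec (θhat j) i + (V * G.lapMatrix ℝ) i j)
      = ∑ i, lambar 0 i * u i := by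
    rw [hVL]
    have hvec : ∀ j : Fin m, (fun i => (Xb j).mulVec (θhat j) i + B i j)
        = fun i => if j = 0 then u i else 0 := by
      intro j; funext i
      simp only [hB, Matrix.of_apply]
      ring
    calc ∑ j, lambar j ⬝ᵥ (fun i => (Xb j).mulVec (θhat j) i + B i j)
        = ∑ j, lambar j ⬝ᵥ (fun i => if j = 0 then u i else 0) := by
          refine Finset.sum_congr rfl fun j _ => ?_
          rw [hvec]
      _ = ∑ i, lambar 0 i * u i := by
          rw [Finset.sum_eq_single 0]
          · simp [dotProduct]
          · intro j _ hj
            simp [dotProduct, hj]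
          · simp
  -- block vectors
  have hblock : ∀ s : Finset (Fin m),
      (∀ i, (X *ᵥ (fun p : (j : Fin m) × Fin (d j) => if p.1 ∈ s then θhat p.1 p.2 else 0)) i
        = ∑ j ∈ s, (Xb j).mulVec (θhat j) i) ∧
      ∑ p : (j : Fin m) × Fin (d j), (if p.1 ∈ s then θhat p.1 p.2 else 0) ^ 2
        = ∑ j ∈ s, ∑ k, (θhat j k) ^ 2 := by
    intro s
    constructor
    · intro i
      simp only [Matrix.mulVec, dotProduct]
      rw [← Finset.univ_sigma_univ, Finset.sum_sigma]
      calc ∑ j : Fin m, ∑ k : Fin (d j), X i ⟨j, k⟩ *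
            (if (⟨j, k⟩ : (j : Fin m) × Fin (d j)).1 ∈ s then θhat j k else 0)
          = ∑ j : Fin m, if j ∈ s then ∑ k, Xb j i k * θhat j k else 0 := by
            refine Finset.sum_congr rfl fun j _ => ?_
            by_cases hj : j ∈ s <;> simp [hj, hX]
        _ = ∑ j ∈ s, ∑ k, Xb j i k * θhat j k := by
            rw [Finset.sum_ite_mem, Finset.univ_inter]
        _ = ∑ j ∈ s, (Xb j).mulVec (θhat j) i := rfl
    · rw [← Finset.univ_sigma_univ, Finset.sum_sigma]
      calc ∑ j : Fin m, ∑ k : Fin (d j),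
            (if (⟨j, k⟩ : (j : Fin m) × Fin (d j)).1 ∈ s then θhat j k else 0) ^ 2
          = ∑ j : Fin m, if j ∈ s then ∑ k, (θhat j k) ^ 2 else 0 := by
            refine Finset.sum_congr rfl fun j _ => ?_
            by_cases hj : j ∈ s <;> simp [hj]
        _ = ∑ j ∈ s, ∑ k, (θhat j k) ^ 2 := by
            rw [Finset.sum_ite_mem, Finset.univ_inter]
  -- bound on B
  have hBj : ∀ j : Fin m, j ≠ 0 → ∑ i, (B i j) ^ 2 ≤ opNorm X ^ 2 * ∑ k, (θhat j k) ^ 2 := by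
    intro j hj
    have h1 : ∀ i, B i j = - (X *ᵥ (fun p : (j : Fin m) × Fin (d j) =>
        if p.1 ∈ ({j} : Finset (Fin m)) then θhat p.1 p.2 else 0)) i := by
      intro i
      rw [(hblock {j}).1 i, Finset.sum_singleton]
      simp [hB, hj]
    have h2 := sumsq_mulVec_le X (fun p : (j : Fin m) × Fin (d j) =>
        if p.1 ∈ ({j} : Finset (Fin m)) then θhat p.1 p.2 else 0)
    rw [(hblock {j}).2, Finset.sum_singleton] at h2
    calc ∑ i, (B i j) ^ 2 = ∑ i, ((X *ᵥ _) i) ^ 2 := by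
          refine Finset.sum_congr rfl fun i _ => ?_
          rw [h1 i]; ring
      _ ≤ opNorm X ^ 2 * ∑ k, (θhat j k) ^ 2 := h2
  have hB0 : ∑ i, (B i 0) ^ 2 ≤ opNorm X ^ 2 *
      ∑ j ∈ Finset.univ.erase 0, ∑ k, (θhat j k) ^ 2 := by
    have h1 : ∀ i, B i 0 = (X *ᵥ (fun p : (j : Fin m) × Fin (d j) =>
        if p.1 ∈ Finset.univ.erase (0 : Fin m) then θhat p.1 p.2 else 0)) i := by
      intro i
      rw [(hblock (Finset.univ.erase 0)).1 i]
      simp only [hB, Matrix.of_apply, hu, if_true, eq_self_iff_true]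
      rw [sub_eq_iff_eq_add]
      exact (Finset.sum_erase_add Finset.univ _ (Finset.mem_univ 0)).symm
    have h2 := sumsq_mulVec_le X (fun p : (j : Fin m) × Fin (d j) =>
        if p.1 ∈ Finset.univ.erase (0 : Fin m) then θhat p.1 p.2 else 0)
    rw [(hblock (Finset.univ.erase 0)).2] at h2
    calc ∑ i, (B i 0) ^ 2 = ∑ i, ((X *ᵥ _) i) ^ 2 := by
          refine Finset.sum_congr rfl fun i _ => ?_
          rw [h1 i]
      _ ≤ _ := h2
  set Θ : ℝ := ∑ j, ∑ k, (θhat j k) ^ 2 with hΘ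
  have hΘ0 : 0 ≤ Θ := by positivity
  have hBtot : ∑ i, ∑ j, (B i j) ^ 2 ≤ 2 * opNorm X ^ 2 * Θ := by
    rw [Finset.sum_comm]
    have hsplit : ∑ j, ∑ i, (B i j) ^ 2
        = (∑ j ∈ Finset.univ.erase 0, ∑ i, (B i j) ^ 2) + ∑ i, (B i 0) ^ 2 := by
      rw [Finset.sum_erase_add Finset.univ _ (Finset.mem_univ 0)]
    rw [hsplit]
    have hE : ∑ j ∈ Finset.univ.erase 0, ∑ k, (θhat j k) ^ 2 ≤ Θ := by
      apply Finset.sum_le_sum_of_subset_of_nonneg (Finset.subset_univ _)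
      intros; positivity
    have h1 : ∑ j ∈ Finset.univ.erase 0, ∑ i, (B i j) ^ 2
        ≤ opNorm X ^ 2 * ∑ j ∈ Finset.univ.erase 0, ∑ k, (θhat j k) ^ 2 := by
      rw [Finset.mul_sum]
      exact Finset.sum_le_sum fun j hj => hBj j (Finset.ne_of_mem_erase hj)
    have hxn : (0:ℝ) ≤ opNorm X ^ 2 := by positivity
    nlinarith [mul_le_mul_of_nonneg_left hE hxn, hB0, h1]
  -- bound on V
  have hFrob : ∑ i, ∑ j, (V i j) ^ 2 ≤ opNorm P ^ 2 * (2 * opNorm X ^ 2 * Θ) := by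
    have h1 : ∀ i : Fin n, ∑ j, (V i j) ^ 2 = ∑ j, (P *ᵥ (fun l => B i l)) j ^ 2 := by
      intro i
      refine Finset.sum_congr rfl fun j _ => ?_
      have hvk : V i j = (P *ᵥ (fun l => B i l)) j := by
        simp [hV, Matrix.mul_apply, Matrix.mulVec, dotProduct, Matrix.transpose_apply,
          mul_comm]
      rw [hvk]
    calc ∑ i, ∑ j, (V i j) ^ 2 = ∑ i, ∑ j, (P *ᵥ (fun l => B i l)) j ^ 2 := by
          exact Finset.sum_congr rfl fun i _ => h1 i
      _ ≤ ∑ i, opNorm P ^ 2 * ∑ j, (B i j) ^ 2 :=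
          Finset.sum_le_sum fun i _ => sumsq_mulVec_le P _
      _ = opNorm P ^ 2 * ∑ i, ∑ j, (B i j) ^ 2 := by rw [Finset.mul_sum]
      _ ≤ opNorm P ^ 2 * (2 * opNorm X ^ 2 * Θ) := by
          apply mul_le_mul_of_nonneg_left hBtot (by positivity)
  -- Fenchel-Young
  set T : EReal := ∑ i, sconj (ℓ i) (lambar 0 i) with hT
  have hfen : ((∑ i, (lambar 0 i * u i - ℓ i (u i)) : ℝ) : EReal) ≤ T := by
    rw [ereal_coe_sum]
    apply Finset.sum_le_sum
    intro i _
    exact le_iSup (fun x => ((lambar 0 i * x - ℓ i x : ℝ) : EReal)) (u i)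
  -- evaluate the infimum at θhat, V
  refine le_trans (iInf_le_of_le θhat (iInf_le_of_le V le_rfl)) ?_
  rcases eq_or_ne T ⊤ with hTtop | hTne
  · have hn : n ≠ 0 := by
      intro hn0
      rw [hT] at hTtop
      subst hn0
      simp at hTtop
    have hcpos : (0:ℝ) < 1 / (n:ℝ) := by positivity
    rw [hTtop, EReal.coe_mul_top_of_pos hcpos, EReal.sub_top]
    exact bot_le
  · have hTbot : T ≠ ⊥ := by
      intro hbot
      rw [hbot] at hfen
      exact (EReal.coe_ne_bot _) (le_bot_iff.mp hfen)
    lift T to ℝ using ⟨hTne, hTbot⟩ with t ht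
    rw [EReal.coe_le_coe_iff] at hfen
    have hc0 : (0:ℝ) ≤ 1 / (n:ℝ) := by positivity
    rw [hS, ← EReal.coe_mul, ← EReal.coe_sub, EReal.coe_le_coe_iff]
    have hfen2 : (1 / (n:ℝ)) * (∑ i, lambar 0 i * u i) - (1 / (n:ℝ)) * t
        ≤ (1 / (n:ℝ)) * ∑ i, ℓ i (u i) := by
      have := mul_le_mul_of_nonneg_left hfen hc0
      rw [Finset.sum_sub_distrib] at this
      nlinarith [this]
    have hVbound : κ * ((∑ j, ∑ k, (θhat j k) ^ 2) + ∑ i, ∑ j, (V i j) ^ 2)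
        ≤ κ * (Θ + opNorm P ^ 2 * (2 * opNorm X ^ 2 * Θ)) := by
      apply mul_le_mul_of_nonneg_left _ hκ.le
      have hΘdef : Θ = ∑ j, ∑ k, (θhat j k) ^ 2 := rfl
      rw [← hΘdef]
      linarith [hFrob]
    have hgoal : κ * (Θ + opNorm P ^ 2 * (2 * opNorm X ^ 2 * Θ))
        = κ * (1 + 2 * opNorm P ^ 2 * opNorm X ^ 2) * Θ := by ring
    have hueq : ∀ i, (∑ j, (Xb j).mulVec (θhat j) i) = u i := fun i => rfl
    simp only [hueq]
    have hΘdef : Θ = ∑ j, ∑ k, (θhat j k) ^ 2 := rfl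
    rw [← hΘdef]
    linarith [hfen2, hVbound, hgoal.le]
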